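/- Let f ≥ 128 be an even integer, N := f/2 + 1, κ(t) := (sin(Nπt)/(N·sin(πt)))⁴ for t ∉ ℤ and κ(t) := 1 for t ∈ ℤ, C_f := π²f(f+4)/3, and for t ∈ ℝ^d let K(t) := Π_{i=1}^d κ(t_i). Then: (a) for every t ∈ ℝ^d with ‖t‖₂ ≤ 1/(8√C_f), one has K(t) ≤ 1 − (C_f/4)‖t‖₂² + 16 C_f² ‖t‖₂⁴; and (b) for every c with 0 < c ≤ 1/(8√(2C_f)) and every t ∈ [−1/2, 1/2]^d with ‖t‖₂ ≥ c, one has |K(t)| ≤ 1 − (C_f/8) c². -/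

import Mathlib

open Classical

/-- The univariate Fejér-type kernel `κ(t) = (sin(Nπt)/(N sin(πt)))⁴` with `N = f/2 + 1`,
extended by `1` at the integers (where the formula degenerates). -/
noncomputable def fejerKappa (f : ℕ) : ℝ → ℝ := fun t =>
  if ∃ n : ℤ, t = (n : ℝ) then 1
  else (Real.sin (((f : ℝ) / 2 + 1) * Real.pi * t) /
      (((f : ℝ) / 2 + 1) * Real.sin (Real.pi * t))) ^ 4

/-- The constant `C_f = −κ''(0) = π² f (f+4)/3`. -/
noncomputable def fejerC (f : ℕ) : ℝ := Real.pi ^ 2 * f * (f + 4) / 3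

section FejerAux
open Real Finset

lemma my_sin_ge (x : ℝ) (hx : 0 ≤ x) : x - x^3/6 ≤ Real.sin x := by
  have hd : ∀ y : ℝ, HasDerivAt (fun z : ℝ => Real.sin z - z + z^3/6)
      (Real.cos y - 1 + y^2/2) y := by
    intro y
    have h1 : HasDerivAt Real.sin (Real.cos y) y := Real.hasDerivAt_sin y
    have h2 : HasDerivAt (fun z : ℝ => z) 1 y := hasDerivAt_id y
    have h3 : HasDerivAt (fun z : ℝ => z^3/6) (3*y^2/6) y := by
      simpa using ((hasDerivAt_pow 3 y).div_const 6)
    refine ((h1.sub h2).add h3).congr_deriv ?_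
    ring
  have hmono : MonotoneOn (fun z : ℝ => Real.sin z - z + z^3/6) (Set.Ici 0) := by
    apply monotoneOn_of_deriv_nonneg (convex_Ici 0)
    · exact (Continuous.continuousOn (by continuity))
    · intro y _
      exact (hd y).differentiableAt.differentiableWithinAt
    · intro y hy
      rw [(hd y).deriv]
      nlinarith [Real.one_sub_sq_div_two_le_cos (x := y)]
  have := hmono Set.self_mem_Ici (Set.mem_Ici.mpr hx) hx
  simp at this
  linarith

lemma my_cos_le (x : ℝ) : Real.cos x ≤ 1 - x^2/2 + x^4/24 := by
  wlog hx : 0 ≤ x with H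
  · have := H (-x) (by linarith)
    rw [Real.cos_neg] at this
    calc Real.cos x ≤ 1 - (-x)^2/2 + (-x)^4/24 := this
    _ = 1 - x^2/2 + x^4/24 := by ring
  have hcos : Real.cos x = 1 - 2 * Real.sin (x/2)^2 := by
    have := Real.sin_sq_eq_half_sub (x/2)
    rw [show 2 * (x/2) = x by ring] at this
    linarith
  rw [hcos]
  rcases le_or_gt (x/2) (Real.sqrt 3) with h | h
  · have h1 : x/2 - (x/2)^3/6 ≤ Real.sin (x/2) := my_sin_ge _ (by linarith)
    have hy2 : (x/2)^2 ≤ 3 := by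
      have := Real.sq_sqrt (by norm_num : (0:ℝ) ≤ 3)
      nlinarith [Real.sqrt_nonneg 3]
    have h2 : 0 ≤ x/2 - (x/2)^3/6 := by nlinarith [hx]
    have h4 := mul_self_le_mul_self h2 h1
    nlinarith [h4, sq_nonneg ((x/2)^3)]
  · have h3 : 3 ≤ (x/2)^2 := by
      have := Real.sq_sqrt (by norm_num : (0:ℝ) ≤ 3)
      nlinarith [Real.sqrt_nonneg 3]
    nlinarith [sq_nonneg (Real.sin (x/2)), sq_nonneg ((x/2)^2 - 3)]

lemma sum_id' (n : ℕ) : ∑ k ∈ range n, (k:ℝ) = n*(n-1)/2 := by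
  induction n with
  | zero => simp
  | succ m ih => rw [Finset.sum_range_succ, ih]; push_cast; ring

lemma sum_sq' (n : ℕ) : ∑ k ∈ range n, (k:ℝ)^2 = n*(n-1)*(2*n-1)/6 := by
  induction n with
  | zero => simp
  | succ m ih => rw [Finset.sum_range_succ, ih]; push_cast; ring

lemma sum_cube' (n : ℕ) : ∑ k ∈ range n, (k:ℝ)^3 = (n*(n-1)/2)^2 := by
  induction n with
  | zero => simp
  | succ m ih => rw [Finset.sum_range_succ, ih]; push_cast; ring

lemma sum_quart' (n : ℕ) : ∑ k ∈ range n, (k:ℝ)^4 = n*(n-1)*(2*n-1)*(3*n^2-3*n-1)/30 := by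
  induction n with
  | zero => simp
  | succ m ih => rw [Finset.sum_range_succ, ih]; push_cast; ring

lemma sumQ2 (N : ℕ) : ∑ k ∈ range N, (2*(k:ℝ)+1-N)^2 = N*((N:ℝ)^2-1)/3 := by
  have h : ∀ k : ℕ, (2*(k:ℝ)+1-N)^2 = 4*(k:ℝ)^2 + (4-4*(N:ℝ))*(k:ℝ) + (1-(N:ℝ))^2 := by
    intro k; ring
  simp_rw [h]
  rw [Finset.sum_add_distrib, Finset.sum_add_distrib, ← Finset.mul_sum, ← Finset.mul_sum,
    Finset.sum_const, Finset.card_range, sum_id', sum_sq']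
  push_cast; ring

lemma sumQ4 (N : ℕ) :
    ∑ k ∈ range N, (2*(k:ℝ)+1-N)^4 = N*((N:ℝ)^2-1)*(3*(N:ℝ)^2-7)/15 := by
  have h : ∀ k : ℕ, (2*(k:ℝ)+1-N)^4 = 16*(k:ℝ)^4 + 32*(1-(N:ℝ))*(k:ℝ)^3
      + 24*(1-(N:ℝ))^2*(k:ℝ)^2 + 8*(1-(N:ℝ))^3*(k:ℝ) + (1-(N:ℝ))^4 := by
    intro k; ring
  simp_rw [h]
  rw [Finset.sum_add_distrib, Finset.sum_add_distrib, Finset.sum_add_distrib,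
    Finset.sum_add_distrib, ← Finset.mul_sum, ← Finset.mul_sum, ← Finset.mul_sum,
    ← Finset.mul_sum, Finset.sum_const, Finset.card_range,
    sum_id', sum_sq', sum_cube', sum_quart']
  push_cast; ring

lemma sumSin (N : ℕ) (θ : ℝ) : ∑ k ∈ range N, Real.sin ((2*(k:ℝ)+1-N)*θ) = 0 := by
  have h := Finset.sum_range_reflect (fun k => Real.sin ((2*(k:ℝ)+1-N)*θ)) N
  have h2 : ∀ k ∈ range N, Real.sin ((2*((N:ℝ)-1-k)+1-N)*θ)
      = - Real.sin ((2*(k:ℝ)+1-N)*θ) := by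
    intro k hk
    rw [← Real.sin_neg]
    ring_nf
  have h3 : ∀ k ∈ range N, (fun k : ℕ => Real.sin ((2*(k:ℝ)+1-N)*θ)) (N - 1 - k)
      = - Real.sin ((2*(k:ℝ)+1-N)*θ) := by
    intro k hk
    simp only []
    have hk' : k < N := Finset.mem_range.mp hk
    have heq : (N - 1 - k : ℕ) = N - (k+1) := by omega
    have hle : k + 1 ≤ N := hk'
    have : ((N - 1 - k : ℕ) : ℝ) = (N:ℝ) - 1 - k := by
      rw [heq, Nat.cast_sub hle]
      push_cast
      ring
    rw [this]
    exact h2 k hk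
  rw [Finset.sum_congr rfl h3] at h
  rw [Finset.sum_neg_distrib] at h
  linarith [h]

lemma dirichlet (N : ℕ) (θ : ℝ) :
    (∑ k ∈ range N, Real.cos ((2*(k:ℝ)+1-N)*θ)) * Real.sin θ = Real.sin (N*θ) := by
  induction N with
  | zero => simp
  | succ m ih =>
    have hsplit : ∀ k ∈ range m, Real.cos ((2*(k:ℝ)+1-(m+1:ℕ))*θ)
        = Real.cos ((2*(k:ℝ)+1-m)*θ) * Real.cos θ + Real.sin ((2*(k:ℝ)+1-m)*θ) * Real.sin θ := by
      intro k hk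
      rw [← Real.cos_sub]
      push_cast
      ring_nf
    rw [Finset.sum_range_succ, Finset.sum_congr rfl hsplit, Finset.sum_add_distrib,
      ← Finset.sum_mul, ← Finset.sum_mul, sumSin]
    push_cast
    rw [add_mul, add_mul]
    have : (2*(m:ℝ)+1-((m:ℝ)+1)) = (m:ℝ) := by ring
    rw [this]
    rw [show ((m:ℝ)+1)*θ = m*θ + θ by ring, Real.sin_add]
    linear_combination Real.cos θ * ih

lemma fejT_le (N : ℕ) (θ : ℝ) :
    ∑ k ∈ range N, Real.cos ((2*(k:ℝ)+1-N)*θ)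
      ≤ N - θ^2/2*((N:ℝ)*((N:ℝ)^2-1)/3) + θ^4/24*((N:ℝ)*((N:ℝ)^2-1)*(3*(N:ℝ)^2-7)/15) := by
  have h1 : ∑ k ∈ range N, Real.cos ((2*(k:ℝ)+1-N)*θ)
      ≤ ∑ k ∈ range N, (1 - (2*(k:ℝ)+1-N)^2*θ^2/2 + (2*(k:ℝ)+1-N)^4*θ^4/24) := by
    apply Finset.sum_le_sum
    intro k _
    have := my_cos_le ((2*(k:ℝ)+1-N)*θ)
    calc Real.cos ((2*(k:ℝ)+1-N)*θ) ≤ 1 - ((2*(k:ℝ)+1-N)*θ)^2/2 + ((2*(k:ℝ)+1-N)*θ)^4/24 := this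
    _ = 1 - (2*(k:ℝ)+1-N)^2*θ^2/2 + (2*(k:ℝ)+1-N)^4*θ^4/24 := by ring
  refine h1.trans ?_
  rw [Finset.sum_add_distrib, Finset.sum_sub_distrib, Finset.sum_const, Finset.card_range]
  have e2 : ∑ k ∈ range N, (2*(k:ℝ)+1-N)^2*θ^2/2 = θ^2/2 * (N*((N:ℝ)^2-1)/3) := by
    rw [← sumQ2 N, Finset.mul_sum]
    apply Finset.sum_congr rfl
    intro k _; ring
  have e4 : ∑ k ∈ range N, (2*(k:ℝ)+1-N)^4*θ^4/24
      = θ^4/24 * (N*((N:ℝ)^2-1)*(3*(N:ℝ)^2-7)/15) := by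
    rw [← sumQ4 N, Finset.mul_sum]
    apply Finset.sum_congr rfl
    intro k _; ring
  rw [e2, e4]
  simp [nsmul_eq_mul]

lemma fejT_ge (N : ℕ) (θ : ℝ) :
    (N:ℝ) - θ^2/2*((N:ℝ)*((N:ℝ)^2-1)/3) ≤ ∑ k ∈ range N, Real.cos ((2*(k:ℝ)+1-N)*θ) := by
  have h1 : ∑ k ∈ range N, (1 - (2*(k:ℝ)+1-N)^2*θ^2/2)
      ≤ ∑ k ∈ range N, Real.cos ((2*(k:ℝ)+1-N)*θ) := by
    apply Finset.sum_le_sum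
    intro k _
    have := Real.one_sub_sq_div_two_le_cos (x := (2*(k:ℝ)+1-N)*θ)
    calc 1 - (2*(k:ℝ)+1-N)^2*θ^2/2 = 1 - ((2*(k:ℝ)+1-N)*θ)^2/2 := by ring
    _ ≤ Real.cos ((2*(k:ℝ)+1-N)*θ) := this
  refine le_trans ?_ h1
  rw [Finset.sum_sub_distrib, Finset.sum_const, Finset.card_range]
  have e2 : ∑ k ∈ range N, (2*(k:ℝ)+1-N)^2*θ^2/2 = θ^2/2 * (N*((N:ℝ)^2-1)/3) := by
    rw [← sumQ2 N, Finset.mul_sum]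
    apply Finset.sum_congr rfl
    intro k _; ring
  rw [e2]
  simp [nsmul_eq_mul]

lemma fejT_abs (N : ℕ) (θ : ℝ) :
    |∑ k ∈ range N, Real.cos ((2*(k:ℝ)+1-N)*θ)| ≤ N := by
  calc |∑ k ∈ range N, Real.cos ((2*(k:ℝ)+1-N)*θ)|
      ≤ ∑ k ∈ range N, |Real.cos ((2*(k:ℝ)+1-N)*θ)| := Finset.abs_sum_le_sum_abs _ _
  _ ≤ ∑ k ∈ range N, (1:ℝ) := Finset.sum_le_sum (fun k _ => Real.abs_cos_le_one _)
  _ = N := by simp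

lemma prod_one_sub_le {ι : Type*} (s : Finset ι) (c : ι → ℝ)
    (h0 : ∀ i ∈ s, 0 ≤ c i) (h1 : ∀ i ∈ s, c i ≤ 1) :
    ∏ i ∈ s, (1 - c i) ≤ 1 - (∑ i ∈ s, c i) + (∑ i ∈ s, c i)^2/2 := by
  induction s using Finset.cons_induction with
  | empty => simp
  | cons a s ha ih =>
    rw [Finset.prod_cons, Finset.sum_cons]
    have h0' : ∀ i ∈ s, 0 ≤ c i := fun i hi => h0 i (Finset.mem_cons_of_mem hi)
    have h1' : ∀ i ∈ s, c i ≤ 1 := fun i hi => h1 i (Finset.mem_cons_of_mem hi)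
    have hS : 0 ≤ ∑ i ∈ s, c i := Finset.sum_nonneg h0'
    have hca : 0 ≤ c a := h0 a (Finset.mem_cons_self a s)
    have hca1 : c a ≤ 1 := h1 a (Finset.mem_cons_self a s)
    have hprod : ∏ i ∈ s, (1 - c i) ≤ 1 - (∑ i ∈ s, c i) + (∑ i ∈ s, c i)^2/2 := ih h0' h1'
    have hmul : (1 - c a) * ∏ i ∈ s, (1 - c i)
        ≤ (1 - c a) * (1 - (∑ i ∈ s, c i) + (∑ i ∈ s, c i)^2/2) := by
      apply mul_le_mul_of_nonneg_left hprod (by linarith)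
    refine hmul.trans ?_
    set S := ∑ i ∈ s, c i
    nlinarith [sq_nonneg (c a), mul_nonneg hca (sq_nonneg S)]

lemma exists_subset_sum {ι : Type*} [DecidableEq ι] (s : Finset ι) (g : ι → ℝ) (b : ℝ) (hb : 0 < b) :
    (∀ i ∈ s, 0 ≤ g i) → (∀ i ∈ s, g i ≤ b) → b ≤ ∑ i ∈ s, g i →
    ∃ J ⊆ s, b ≤ ∑ i ∈ J, g i ∧ ∑ i ∈ J, g i ≤ 2*b := by
  induction s using Finset.strongInduction with
  | _ s ih =>
    intro h0 h1 htot
    by_cases hs : ∃ i ∈ s, b ≤ ∑ j ∈ s.erase i, g j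
    · obtain ⟨i, hi, hle⟩ := hs
      obtain ⟨J, hJ, h2, h3⟩ := ih (s.erase i) (Finset.erase_ssubset hi)
        (fun j hj => h0 j (Finset.mem_of_mem_erase hj))
        (fun j hj => h1 j (Finset.mem_of_mem_erase hj)) hle
      exact ⟨J, hJ.trans (Finset.erase_subset i s), h2, h3⟩
    · push_neg at hs
      have hne : s.Nonempty := by
        rcases Finset.eq_empty_or_nonempty s with rfl | h
        · simp at htot; linarith
        · exact h
      obtain ⟨i, hi⟩ := hne
      have h4 := hs i hi
      have h5 : ∑ j ∈ s, g j = g i + ∑ j ∈ s.erase i, g j :=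
        (Finset.add_sum_erase s g hi).symm
      refine ⟨s, Finset.Subset.refl s, htot, ?_⟩
      have := h1 i hi
      linarith

section Univariate

variable {f : ℕ}

lemma fejerC_eq (hfe : Even f) :
    fejerC f = 4*Real.pi^2*(((f/2+1 : ℕ):ℝ)^2-1)/3 := by
  obtain ⟨m, hm⟩ := hfe
  have h2 : f/2+1 = m+1 := by omega
  rw [fejerC, h2, hm]
  push_cast
  ring

lemma nge65 (hfe : Even f) (hf : 128 ≤ f) : (65:ℝ) ≤ ((f/2+1 : ℕ):ℝ) := by
  have : 65 ≤ f/2+1 := by omega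
  exact_mod_cast this

lemma fejerC_pos (hfe : Even f) (hf : 128 ≤ f) : 0 < fejerC f := by
  rw [fejerC_eq hfe]
  have h65 := nge65 hfe hf
  have h1 : 0 < Real.pi^2 := by positivity
  have h2 : (1:ℝ) ≤ ((f/2+1 : ℕ):ℝ)^2 - 1 := by nlinarith [h65]
  nlinarith [mul_le_mul_of_nonneg_left h2 h1.le]

lemma kappa_nonneg (f : ℕ) (u : ℝ) : 0 ≤ fejerKappa f u := by
  rw [fejerKappa]
  split
  · norm_num
  · positivity

lemma kappa_repr (hfe : Even f) (u : ℝ) (hu : ¬∃ m : ℤ, u = (m:ℝ)) :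
    fejerKappa f u
      = ((∑ k ∈ range (f/2+1), Real.cos ((2*(k:ℝ)+1-((f/2+1:ℕ):ℝ))*(Real.pi*u)))
          / ((f/2+1:ℕ):ℝ))^4 := by
  have hsin : Real.sin (Real.pi*u) ≠ 0 := by
    intro h
    rw [Real.sin_eq_zero_iff] at h
    obtain ⟨m, hm⟩ := h
    refine hu ⟨m, ?_⟩
    have hπ : (Real.pi:ℝ) ≠ 0 := Real.pi_ne_zero
    have : Real.pi * u = Real.pi * m := by linarith [hm]
    exact mul_left_cancel₀ hπ this
  obtain ⟨m, hm⟩ := hfe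
  have h2 : f/2+1 = m+1 := by omega
  have harg : ((f:ℝ)/2+1) = ((f/2+1:ℕ):ℝ) := by
    rw [h2, hm]; push_cast; ring
  rw [fejerKappa]
  rw [if_neg hu, harg]
  have hd := dirichlet (f/2+1) (Real.pi*u)
  have hn0 : ((f/2+1:ℕ):ℝ) ≠ 0 := by positivity
  have harg2 : ((f/2+1:ℕ):ℝ) * Real.pi * u = ((f/2+1:ℕ):ℝ) * (Real.pi*u) := by ring
  rw [harg2, ← hd]
  field_simp
  ring_nf
  congr 1
  apply Finset.sum_congr rfl
  intro k _
  ring_nf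

lemma kappa_eq_one (f : ℕ) (u : ℝ) (hu : ∃ m : ℤ, u = (m:ℝ)) : fejerKappa f u = 1 := by
  rw [fejerKappa, if_pos hu]

lemma kappa_le_one (hfe : Even f) (u : ℝ) : fejerKappa f u ≤ 1 := by
  by_cases hu : ∃ m : ℤ, u = (m:ℝ)
  · rw [kappa_eq_one f u hu]
  · rw [kappa_repr hfe u hu]
    set T := ∑ k ∈ range (f/2+1), Real.cos ((2*(k:ℝ)+1-((f/2+1:ℕ):ℝ))*(Real.pi*u)) with hT
    have habs : |T| ≤ ((f/2+1:ℕ):ℝ) := fejT_abs (f/2+1) (Real.pi*u)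
    have hn0 : (0:ℝ) < ((f/2+1:ℕ):ℝ) := by positivity
    have h1 : |T / ((f/2+1:ℕ):ℝ)| ≤ 1 := by
      rw [abs_div, abs_of_pos hn0]
      rw [div_le_one hn0]
      exact habs
    calc (T / ((f/2+1:ℕ):ℝ))^4 = |T / ((f/2+1:ℕ):ℝ)|^4 := by
          rw [← abs_pow, abs_of_nonneg (by positivity)]
      _ ≤ 1 := by
          have := pow_le_one₀ (abs_nonneg _) h1 (n := 4)
          simpa using this

end Univariate

lemma int_abs_small {u : ℝ} (hu : ∃ m : ℤ, u = (m:ℝ)) (h : |u| < 1) : u = 0 := by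
  obtain ⟨m, rfl⟩ := hu
  have h1 : |(m:ℝ)| < 1 := h
  rw [← Int.cast_abs] at h1
  have h2 : |m| < 1 := by exact_mod_cast h1
  have h3 : m = 0 := Int.abs_lt_one_iff.mp h2
  simp [h3]

section Univ2
variable {f : ℕ}

lemma sqrtC_pos (hfe : Even f) (hf : 128 ≤ f) : 0 < Real.sqrt (fejerC f) :=
  Real.sqrt_pos.mpr (fejerC_pos hfe hf)

lemma one_le_C (hfe : Even f) (hf : 128 ≤ f) : 1 ≤ fejerC f := by
  rw [fejerC_eq hfe]
  have h65 := nge65 hfe hf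
  have h1 : (9:ℝ) ≤ Real.pi^2 := by nlinarith [Real.pi_gt_three]
  have h2 : (4224:ℝ) ≤ ((f/2+1:ℕ):ℝ)^2 - 1 := by nlinarith
  have h3 : (9:ℝ)*4224 ≤ Real.pi^2*(((f/2+1:ℕ):ℝ)^2-1) :=
    mul_le_mul h1 h2 (by norm_num) (by positivity)
  linarith

set_option maxHeartbeats 1000000 in
lemma kappa_K1 (hfe : Even f) (hf : 128 ≤ f) (u : ℝ)
    (h : |u| ≤ 1/(8*Real.sqrt (fejerC f))) :
    fejerKappa f u ≤ 1 - fejerC f/3 * u^2 := by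
  have hCpos := fejerC_pos hfe hf
  have hssq : Real.sqrt (fejerC f)^2 = fejerC f := Real.sq_sqrt hCpos.le
  have hspos := sqrtC_pos hfe hf
  have hu2 : u^2 ≤ 1/(64*fejerC f) := by
    have h1 : |u|^2 ≤ (1/(8*Real.sqrt (fejerC f)))^2 := by
      apply pow_le_pow_left₀ (abs_nonneg u) h
    rw [sq_abs] at h1
    calc u^2 ≤ (1/(8*Real.sqrt (fejerC f)))^2 := h1
      _ = 1/(64*fejerC f) := by rw [div_pow, mul_pow, hssq]; norm_num
  by_cases hu : ∃ m : ℤ, u = (m:ℝ)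
  · have hC1 := one_le_C hfe hf
    have hs1 : 1 ≤ Real.sqrt (fejerC f) := by
      rw [show (1:ℝ) = Real.sqrt 1 by simp]
      exact Real.sqrt_le_sqrt hC1
    have hu0 : u = 0 := int_abs_small hu (by
      have : 1/(8*Real.sqrt (fejerC f)) ≤ 1/8 := by
        apply div_le_div_of_nonneg_left (by norm_num) (by norm_num) (by linarith)
      linarith)
    rw [hu0, kappa_eq_one f 0 ⟨0, by simp⟩]
    norm_num
  · set n : ℝ := ((f/2+1:ℕ):ℝ) with hndef
    have hn65 : (65:ℝ) ≤ n := nge65 hfe hf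
    have hn0 : (0:ℝ) < n := by linarith
    have hC : fejerC f = 4*Real.pi^2*(n^2-1)/3 := fejerC_eq hfe
    have hπl : (3.14159:ℝ) ≤ Real.pi := by linarith [Real.pi_gt_d6]
    have hπu : Real.pi ≤ 3.1416 := by linarith [Real.pi_lt_d6]
    have hp2l : (9.8695:ℝ) ≤ Real.pi^2 := by nlinarith
    have hp2u : Real.pi^2 ≤ 9.8697 := by nlinarith
    have hp4u : Real.pi^4 ≤ 97.42 := by nlinarith [hp2l, hp2u]
    have hn1 : (0:ℝ) ≤ n^2 - 1 := by nlinarith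
    have hrep := kappa_repr hfe u hu
    set T := ∑ k ∈ range (f/2+1), Real.cos ((2*(k:ℝ)+1-n)*(Real.pi*u)) with hTdef
    have hTu : T ≤ n*(1 - Real.pi^2*(n^2-1)/6*u^2 + Real.pi^4*(n^2-1)*(3*n^2-7)/360*u^4) := by
      have h0 := fejT_le (f/2+1) (Real.pi*u)
      calc T ≤ n - (Real.pi*u)^2/2*(n*(n^2-1)/3)
          + (Real.pi*u)^4/24*(n*(n^2-1)*(3*n^2-7)/15) := h0
        _ = n*(1 - Real.pi^2*(n^2-1)/6*u^2 + Real.pi^4*(n^2-1)*(3*n^2-7)/360*u^4) := by ring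
    have hTl : n*(1 - Real.pi^2*(n^2-1)/6*u^2) ≤ T := by
      have h0 := fejT_ge (f/2+1) (Real.pi*u)
      calc n*(1 - Real.pi^2*(n^2-1)/6*u^2)
          = n - (Real.pi*u)^2/2*(n*(n^2-1)/3) := by ring
        _ ≤ T := h0
    set x := Real.pi^2*(n^2-1)/6*u^2 with hxdef
    set y := Real.pi^4*(n^2-1)*(3*n^2-7)/360*u^4 with hydef
    have hApos : (0:ℝ) < Real.pi^2*(n^2-1)/6 := by nlinarith
    have hx0 : 0 ≤ x := by
      rw [hxdef]; exact mul_nonneg (by positivity) (sq_nonneg u) |>.trans_eq rfl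
    have hy0 : 0 ≤ y := by
      rw [hydef]
      apply mul_nonneg _ (by positivity)
      have : (0:ℝ) ≤ 3*n^2-7 := by nlinarith
      positivity
    have hCA : fejerC f = 8*(Real.pi^2*(n^2-1)/6) := by rw [hC]; ring
    have hu2' : u^2 ≤ 1/(512*(Real.pi^2*(n^2-1)/6)) := by
      rw [hCA] at hu2
      calc u^2 ≤ 1/(64*(8*(Real.pi^2*(n^2-1)/6))) := hu2
        _ = 1/(512*(Real.pi^2*(n^2-1)/6)) := by ring_nf
    have hx512 : x ≤ 1/512 := by
      rw [hxdef]
      calc Real.pi^2*(n^2-1)/6*u^2 ≤ Real.pi^2*(n^2-1)/6*(1/(512*(Real.pi^2*(n^2-1)/6))) :=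
            mul_le_mul_of_nonneg_left hu2' hApos.le
        _ = 1/512 := by
            have hne : Real.pi^2*(n^2-1) ≠ 0 := by nlinarith
            rw [mul_one_div, div_mul_cancel_right₀ hApos.ne']; norm_num
    have hyx : y ≤ (3/10)*x^2 := by
      have hBA : Real.pi^4*(n^2-1)*(3*n^2-7)/360 ≤ (3/10)*(Real.pi^2*(n^2-1)/6)^2 := by
        nlinarith [mul_nonneg (pow_nonneg Real.pi_pos.le 4) hn1]
      have h4 : (0:ℝ) ≤ u^4 := by positivity
      have := mul_le_mul_of_nonneg_right hBA h4
      rw [hxdef, hydef]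
      nlinarith [this]
    -- kernel bound
    have hT0 : (0:ℝ) ≤ T := by nlinarith [hTl, mul_nonneg hn0.le (show (0:ℝ) ≤ 1 - x by linarith)]
    have hk : fejerKappa f u ≤ (1-x+y)^4 := by
      rw [hrep]
      have h1 : T^4 ≤ (n*(1-x+y))^4 := pow_le_pow_left₀ hT0 hTu 4
      have h2 : (T/n)^4 = T^4/n^4 := by rw [div_pow]
      rw [h2]
      rw [div_le_iff₀ (by positivity)]
      calc T^4 ≤ (n*(1-x+y))^4 := h1
        _ = (1-x+y)^4 * n^4 := by ring
    have hCx : fejerC f/3*u^2 = 8/3*x := by rw [hCA, hxdef]; ring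
    rw [hCx]
    refine hk.trans ?_
    have hw0 : 0 ≤ x - y := by nlinarith [mul_le_mul_of_nonneg_left hx512 hx0]
    have hw512 : x - y ≤ 1/512 := by linarith
    have hq : (1-x+y)^4 ≤ 1 - 4*(x-y) + 6*(x-y)^2 := by
      nlinarith [mul_nonneg (pow_nonneg hw0 3) (show (0:ℝ) ≤ 4-(x-y) by linarith)]
    refine hq.trans ?_
    nlinarith [mul_le_mul_of_nonneg_right hw512 hw0, mul_le_mul_of_nonneg_left hx512 hx0]
end Univ2


-- numeric core for K2 small regime: no T in context
set_option maxHeartbeats 800000 in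
lemma numK2core (p n u : ℝ)
    (hp2l : (9.8695:ℝ) ≤ p^2) (hp2u : p^2 ≤ 9.8697) (hp4u : p^4 ≤ 97.42)
    (hn65 : (65:ℝ) ≤ n)
    (hx_lb : 1/512 ≤ p^2*(n^2-1)/6*u^2)
    (hvu : n^2*u^2 ≤ (2001/4000)^2) :
    1/2001 ≤ p^2*(n^2-1)/6*u^2 - p^4*(n^2-1)*(3*n^2-7)/360*u^4
      ∧ p^2*(n^2-1)/6*u^2 ≤ 0.412 := by
  have hn1 : (0:ℝ) ≤ n^2 - 1 := by nlinarith
  have hn2 : (4225:ℝ) ≤ n^2 := by nlinarith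
  have hn0 : (0:ℝ) < n := by linarith
  have hv0 : (0:ℝ) ≤ n^2*u^2 := by positivity
  have hA_ub : p^2*(n^2-1)/6 ≤ 1.645*n^2 := by
    nlinarith [mul_nonneg (show (0:ℝ) ≤ 9.8697 - p^2 by linarith) (sq_nonneg n), sq_nonneg p]
  have hA_lb : 1.6445*n^2 ≤ p^2*(n^2-1)/6 := by
    nlinarith [mul_nonneg (show (0:ℝ) ≤ p^2 - 9.8695 by linarith) hn1]
  have hx_ub_v : p^2*(n^2-1)/6*u^2 ≤ 1.645*(n^2*u^2) := by
    nlinarith [mul_le_mul_of_nonneg_right hA_ub (sq_nonneg u)]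
  have hx_lb_v : 1.6445*(n^2*u^2) ≤ p^2*(n^2-1)/6*u^2 := by
    nlinarith [mul_le_mul_of_nonneg_right hA_lb (sq_nonneg u)]
  have hq1 : (0:ℝ) ≤ (n^2-1)*(3*n^2-7) := mul_nonneg hn1 (by nlinarith)
  have hq2 : (n^2-1)*(3*n^2-7) ≤ 3*n^4 := by nlinarith
  have hq3 : p^4*((n^2-1)*(3*n^2-7)) ≤ 97.42*(3*n^4) :=
    mul_le_mul hp4u hq2 hq1 (by norm_num)
  have h4 : (0:ℝ) ≤ u^4 := by positivity
  have hy_ub : p^4*(n^2-1)*(3*n^2-7)/360*u^4 ≤ 0.812*(n^2*u^2)^2 := by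
    nlinarith [mul_le_mul_of_nonneg_right hq3 h4]
  have hv_lb : 0.00118 ≤ n^2*u^2 := by nlinarith [hx_ub_v, hx_lb]
  have hy2 : p^4*(n^2-1)*(3*n^2-7)/360*u^4 ≤ 0.2033*(n^2*u^2) := by
    nlinarith [hy_ub, mul_le_mul_of_nonneg_right hvu hv0]
  constructor
  · nlinarith [hx_lb_v, hy2, hv_lb]
  · nlinarith [hx_ub_v, hvu]

section Univ3
variable {f : ℕ}

set_option maxHeartbeats 800000 in
lemma kappa_K2 (hfe : Even f) (hf : 128 ≤ f) (u : ℝ)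
    (h1 : 1/(8*Real.sqrt (fejerC f)) ≤ |u|) (h2 : |u| ≤ 1/2) :
    fejerKappa f u ≤ 1023/1024 := by
  have hCpos := fejerC_pos hfe hf
  have hssq : Real.sqrt (fejerC f)^2 = fejerC f := Real.sq_sqrt hCpos.le
  have hspos := sqrtC_pos hfe hf
  have hu : ¬∃ m : ℤ, u = (m:ℝ) := by
    intro hu
    have h0 : u = 0 := int_abs_small hu (by linarith)
    rw [h0, abs_zero] at h1
    have : (0:ℝ) < 1/(8*Real.sqrt (fejerC f)) := by positivity
    linarith
  have hu2l : 1/(64*fejerC f) ≤ u^2 := by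
    have h3 : (1/(8*Real.sqrt (fejerC f)))^2 ≤ |u|^2 :=
      pow_le_pow_left₀ (by positivity) h1 2
    rw [sq_abs] at h3
    calc 1/(64*fejerC f) = (1/(8*Real.sqrt (fejerC f)))^2 := by
          rw [div_pow, mul_pow, hssq]; norm_num
      _ ≤ u^2 := h3
  set n : ℝ := ((f/2+1:ℕ):ℝ) with hndef
  have hn65 : (65:ℝ) ≤ n := nge65 hfe hf
  have hn0 : (0:ℝ) < n := by linarith
  have hC : fejerC f = 4*Real.pi^2*(n^2-1)/3 := fejerC_eq hfe
  have hπl : (3.14159:ℝ) ≤ Real.pi := by linarith [Real.pi_gt_d6]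
  have hπu : Real.pi ≤ 3.1416 := by linarith [Real.pi_lt_d6]
  have hp2l : (9.8695:ℝ) ≤ Real.pi^2 := by nlinarith
  have hp2u : Real.pi^2 ≤ 9.8697 := by nlinarith
  have hp4u : Real.pi^4 ≤ 97.42 := by nlinarith [hp2l, hp2u]
  have hn1 : (0:ℝ) < n^2 - 1 := by nlinarith
  have hApos : (0:ℝ) < Real.pi^2*(n^2-1)/6 := by positivity
  have hrep := kappa_repr hfe u hu
  set T := ∑ k ∈ range (f/2+1), Real.cos ((2*(k:ℝ)+1-n)*(Real.pi*u)) with hTdef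
  have hq4 : ((2000:ℝ)/2001)^4 ≤ 1023/1024 := by norm_num
  rcases le_or_gt (|u|) ((2001/4000)/n) with hsmall | hbig
  · -- quadratic regime
    have hCA : fejerC f = 8*(Real.pi^2*(n^2-1)/6) := by rw [hC]; ring
    have hu2l' : 1/(512*(Real.pi^2*(n^2-1)/6)) ≤ u^2 := by
      rw [hCA] at hu2l
      calc 1/(512*(Real.pi^2*(n^2-1)/6)) = 1/(64*(8*(Real.pi^2*(n^2-1)/6))) := by ring_nf
        _ ≤ u^2 := hu2l
    have hx_lb : 1/512 ≤ Real.pi^2*(n^2-1)/6*u^2 := by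
      calc (1:ℝ)/512 = Real.pi^2*(n^2-1)/6*(1/(512*(Real.pi^2*(n^2-1)/6))) := by
            field_simp
        _ ≤ Real.pi^2*(n^2-1)/6*u^2 := mul_le_mul_of_nonneg_left hu2l' hApos.le
    have hvu : n^2*u^2 ≤ (2001/4000)^2 := by
      have h3 : |u|^2 ≤ ((2001/4000)/n)^2 := pow_le_pow_left₀ (abs_nonneg u) hsmall 2
      rw [sq_abs, div_pow] at h3
      have h4 : u^2*n^2 ≤ (2001/4000)^2 := by
        rw [← le_div_iff₀ (by positivity)]
        exact h3
      linarith [h4]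
    obtain ⟨hxy, hx_ub⟩ := numK2core Real.pi n u hp2l hp2u hp4u hn65 hx_lb hvu
    have hTu : T ≤ n*(1 - Real.pi^2*(n^2-1)/6*u^2 + Real.pi^4*(n^2-1)*(3*n^2-7)/360*u^4) := by
      have h0 := fejT_le (f/2+1) (Real.pi*u)
      calc T ≤ n - (Real.pi*u)^2/2*(n*(n^2-1)/3)
          + (Real.pi*u)^4/24*(n*(n^2-1)*(3*n^2-7)/15) := h0
        _ = n*(1 - Real.pi^2*(n^2-1)/6*u^2 + Real.pi^4*(n^2-1)*(3*n^2-7)/360*u^4) := by ring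
    have hTl : n*(1 - Real.pi^2*(n^2-1)/6*u^2) ≤ T := by
      have h0 := fejT_ge (f/2+1) (Real.pi*u)
      calc n*(1 - Real.pi^2*(n^2-1)/6*u^2)
          = n - (Real.pi*u)^2/2*(n*(n^2-1)/3) := by ring
        _ ≤ T := h0
    have hT0 : (0:ℝ) ≤ T := by
      have h7 : (0:ℝ) ≤ n*(1 - Real.pi^2*(n^2-1)/6*u^2) :=
        mul_nonneg hn0.le (by linarith)
      linarith
    have hTq : T ≤ n*(2000/2001) := by
      have h6 : (1:ℝ) - Real.pi^2*(n^2-1)/6*u^2 + Real.pi^4*(n^2-1)*(3*n^2-7)/360*u^4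
          ≤ 2000/2001 := by linarith
      calc T ≤ n*(1 - Real.pi^2*(n^2-1)/6*u^2 + Real.pi^4*(n^2-1)*(3*n^2-7)/360*u^4) := hTu
        _ ≤ n*(2000/2001) := mul_le_mul_of_nonneg_left h6 hn0.le
    rw [hrep]
    calc (T/n)^4 ≤ (2000/2001)^4 := by
          apply pow_le_pow_left₀ (by positivity)
          rw [div_le_iff₀ hn0]
          linarith [hTq]
      _ ≤ 1023/1024 := hq4
  · -- crude regime
    have hTs : T * Real.sin (Real.pi*u) = Real.sin (n*(Real.pi*u)) :=
      dirichlet (f/2+1) (Real.pi*u)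
    have habs : |T| * |Real.sin (Real.pi*u)| ≤ 1 := by
      rw [← abs_mul, hTs]
      exact Real.abs_sin_le_one _
    have hsinabs : |Real.sin (Real.pi*u)| = Real.sin (Real.pi*|u|) := by
      rcases le_or_gt 0 u with h0 | h0
      · rw [abs_of_nonneg h0, abs_of_nonneg]
        apply Real.sin_nonneg_of_nonneg_of_le_pi (by positivity)
        have hu1 : u ≤ 1 := by rw [abs_of_nonneg h0] at h2; linarith
        nlinarith [mul_le_mul_of_nonneg_left hu1 Real.pi_pos.le]
      · rw [abs_of_neg h0, show Real.pi*u = -(Real.pi*(-u)) by ring, Real.sin_neg, abs_neg,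
          abs_of_nonneg]
        apply Real.sin_nonneg_of_nonneg_of_le_pi
          (mul_nonneg Real.pi_pos.le (by linarith))
        have hu1 : -u ≤ 1 := by rw [abs_of_neg h0] at h2; linarith
        nlinarith [mul_le_mul_of_nonneg_left hu1 Real.pi_pos.le]
    have hjordan : 2*|u| ≤ Real.sin (Real.pi*|u|) := by
      have hh := Real.mul_le_sin (x := Real.pi*|u|) (by positivity)
        (by nlinarith [mul_le_mul_of_nonneg_left h2 Real.pi_pos.le])
      calc 2*|u| = 2/Real.pi*(Real.pi*|u|) := by field_simp
        _ ≤ Real.sin (Real.pi*|u|) := hh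
    have hbig' : 2001/4000 < n*|u| := by
      rw [div_lt_iff₀ hn0] at hbig
      linarith [hbig]
    have hTb : |T| ≤ n*(2000/2001) := by
      have hs2 : 2*|u| ≤ |Real.sin (Real.pi*u)| := by rw [hsinabs]; exact hjordan
      have h5 : |T| * (2*|u|) ≤ 1 := by
        calc |T| * (2*|u|) ≤ |T| * |Real.sin (Real.pi*u)| :=
              mul_le_mul_of_nonneg_left hs2 (abs_nonneg T)
          _ ≤ 1 := habs
      nlinarith [mul_le_mul_of_nonneg_left h5 hn0.le,
        mul_nonneg (abs_nonneg T) (sub_pos.mpr hbig').le]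
    rw [hrep]
    have habs4 : (T/n)^4 = (|T|/n)^4 := by
      have h7 : |T/n|^4 = (T/n)^4 := by
        rw [← abs_pow]
        exact abs_of_nonneg (by positivity)
      rw [← h7, abs_div, abs_of_pos hn0]
    rw [habs4]
    calc (|T|/n)^4 ≤ (2000/2001)^4 := by
          apply pow_le_pow_left₀ (by positivity)
          rw [div_le_iff₀ hn0]
          linarith [hTb]
      _ ≤ 1023/1024 := hq4
end Univ3

end FejerAux

set_option maxHeartbeats 2000000 in
/-- Lemma 15 of the paper.
(a) For `‖t‖₂ ≤ 1/(8√C_f)`: `K(t) ≤ 1 − (C_f/4)‖t‖₂² + 16 C_f² ‖t‖₂⁴`;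
(b) for `0 < c ≤ 1/(8√(2C_f))` and `t ∈ [−1/2,1/2]^d` with `‖t‖₂ ≥ c`:
`|K(t)| ≤ 1 − (C_f/8) c²`, where `K(t) = ∏ᵢ κ(tᵢ)`. -/
theorem statement9 {d : ℕ} (f : ℕ) (hfeven : Even f) (hf : 128 ≤ f) :
    (∀ t : EuclideanSpace ℝ (Fin d), ‖t‖ ≤ 1 / (8 * Real.sqrt (fejerC f)) →
      (∏ i, fejerKappa f (t i)) ≤
        1 - fejerC f / 4 * ‖t‖ ^ 2 + 16 * fejerC f ^ 2 * ‖t‖ ^ 4) ∧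
    (∀ c : ℝ, 0 < c → c ≤ 1 / (8 * Real.sqrt (2 * fejerC f)) →
      ∀ t : EuclideanSpace ℝ (Fin d), (∀ i, |t i| ≤ 1 / 2) → c ≤ ‖t‖ →
        |∏ i, fejerKappa f (t i)| ≤ 1 - fejerC f / 8 * c ^ 2) := by
  have hCpos := fejerC_pos hfeven hf
  have hssq : Real.sqrt (fejerC f)^2 = fejerC f := Real.sq_sqrt hCpos.le
  have hspos : 0 < Real.sqrt (fejerC f) := Real.sqrt_pos.mpr hCpos
  have hnormsq : ∀ t : EuclideanSpace ℝ (Fin d), ‖t‖^2 = ∑ i, (t i)^2 := by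
    intro t
    rw [EuclideanSpace.norm_eq, Real.sq_sqrt (by positivity)]
    congr 1
    funext i
    rw [Real.norm_eq_abs, sq_abs]
  have hcoord : ∀ t : EuclideanSpace ℝ (Fin d), ∀ i, |t i| ≤ ‖t‖ := by
    intro t i
    have h1 : (t i)^2 ≤ ∑ j, (t j)^2 :=
      Finset.single_le_sum (f := fun j => (t j)^2) (fun j _ => sq_nonneg _) (Finset.mem_univ i)
    have h2 : (t i)^2 ≤ ‖t‖^2 := by rw [hnormsq t]; exact h1
    calc |t i| = Real.sqrt ((t i)^2) := (Real.sqrt_sq_eq_abs _).symm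
      _ ≤ Real.sqrt (‖t‖^2) := Real.sqrt_le_sqrt h2
      _ = ‖t‖ := Real.sqrt_sq (norm_nonneg t)
  constructor
  · -- part (a)
    intro t ht
    have htsq : ‖t‖^2 ≤ 1/(64*fejerC f) := by
      have h3 : ‖t‖^2 ≤ (1/(8*Real.sqrt (fejerC f)))^2 :=
        pow_le_pow_left₀ (norm_nonneg t) ht 2
      calc ‖t‖^2 ≤ (1/(8*Real.sqrt (fejerC f)))^2 := h3
        _ = 1/(64*fejerC f) := by rw [div_pow, mul_pow, hssq]; norm_num
    have hkap : ∀ i, fejerKappa f (t i) ≤ 1 - fejerC f/3*(t i)^2 := by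
      intro i
      exact kappa_K1 hfeven hf (t i) ((hcoord t i).trans ht)
    have hc0 : ∀ i ∈ Finset.univ (α := Fin d), 0 ≤ fejerC f/3*(t i)^2 := by
      intro i _
      positivity
    have hc1 : ∀ i ∈ Finset.univ (α := Fin d), fejerC f/3*(t i)^2 ≤ 1 := by
      intro i _
      have h4 : (t i)^2 ≤ 1/(64*fejerC f) := by
        have := hcoord t i
        have h5 : (t i)^2 ≤ ‖t‖^2 := by
          rw [← sq_abs]
          exact pow_le_pow_left₀ (abs_nonneg _) this 2
        linarith
      have h6 : fejerC f/3*(t i)^2 ≤ fejerC f/3*(1/(64*fejerC f)) :=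
        mul_le_mul_of_nonneg_left h4 (by positivity)
      have h7 : fejerC f/3*(1/(64*fejerC f)) = 1/192 := by field_simp; ring
      linarith
    have hprod : (∏ i, fejerKappa f (t i)) ≤ ∏ i, (1 - fejerC f/3*(t i)^2) :=
      Finset.prod_le_prod (fun i _ => kappa_nonneg f (t i)) (fun i _ => hkap i)
    have happ := prod_one_sub_le Finset.univ (fun i => fejerC f/3*(t i)^2) hc0 hc1
    have hS : ∑ i, fejerC f/3*(t i)^2 = fejerC f/3*‖t‖^2 := by
      rw [← Finset.mul_sum, hnormsq t]
    rw [hS] at happ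
    have hfinal : 1 - fejerC f/3*‖t‖^2 + (fejerC f/3*‖t‖^2)^2/2
        ≤ 1 - fejerC f/4*‖t‖^2 + 16*fejerC f^2*‖t‖^4 := by
      nlinarith [mul_nonneg hCpos.le (sq_nonneg ‖t‖), sq_nonneg (fejerC f*‖t‖^2)]
    calc (∏ i, fejerKappa f (t i)) ≤ ∏ i, (1 - fejerC f/3*(t i)^2) := hprod
      _ ≤ 1 - fejerC f/3*‖t‖^2 + (fejerC f/3*‖t‖^2)^2/2 := happ
      _ ≤ 1 - fejerC f/4*‖t‖^2 + 16*fejerC f^2*‖t‖^4 := hfinal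
  · -- part (b)
    intro c hc hcu t hhalf hnt
    have h2C : Real.sqrt (2*fejerC f)^2 = 2*fejerC f := Real.sq_sqrt (by positivity)
    have hc2 : c^2 ≤ 1/(128*fejerC f) := by
      have h3 : c^2 ≤ (1/(8*Real.sqrt (2*fejerC f)))^2 := pow_le_pow_left₀ hc.le hcu 2
      calc c^2 ≤ (1/(8*Real.sqrt (2*fejerC f)))^2 := h3
        _ = 1/(128*fejerC f) := by rw [div_pow, mul_pow, h2C]; ring_nf
    have hCc8 : fejerC f/8*c^2 ≤ 1/1024 := by
      have h6 : fejerC f/8*c^2 ≤ fejerC f/8*(1/(128*fejerC f)) :=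
        mul_le_mul_of_nonneg_left hc2 (by positivity)
      have h7 : fejerC f/8*(1/(128*fejerC f)) = 1/1024 := by field_simp; ring
      linarith
    have habs : |∏ i, fejerKappa f (t i)| = ∏ i, fejerKappa f (t i) :=
      abs_of_nonneg (Finset.prod_nonneg (fun i _ => kappa_nonneg f (t i)))
    rw [habs]
    by_cases hcase : ∃ i, c^2/2 ≤ (t i)^2
    · obtain ⟨i, hi⟩ := hcase
      have hprodle : (∏ j, fejerKappa f (t j)) ≤ fejerKappa f (t i) := by
        rw [← Finset.mul_prod_erase Finset.univ _ (Finset.mem_univ i)]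
        apply mul_le_of_le_one_right (kappa_nonneg f (t i))
        apply Finset.prod_le_one (fun j _ => kappa_nonneg f (t j))
          (fun j _ => kappa_le_one hfeven (t j))
      rcases le_or_gt (|t i|) (1/(8*Real.sqrt (fejerC f))) with hsm | hbg
      · have hk := kappa_K1 hfeven hf (t i) hsm
        have h8 : fejerC f/3*(c^2/2) ≤ fejerC f/3*(t i)^2 :=
          mul_le_mul_of_nonneg_left hi (by positivity)
        have : fejerKappa f (t i) ≤ 1 - fejerC f/8*c^2 := by
          nlinarith [mul_nonneg hCpos.le (sq_nonneg c)]
        linarith [hprodle]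
      · have hk := kappa_K2 hfeven hf (t i) hbg.le (hhalf i)
        linarith [hprodle, hCc8]
    · push_neg at hcase
      have htot : c^2 ≤ ∑ i, (t i)^2 := by
        have h9 : c^2 ≤ ‖t‖^2 := pow_le_pow_left₀ hc.le hnt 2
        rw [hnormsq t] at h9
        exact h9
      have htot2 : c^2/2 ≤ ∑ i, (t i)^2 := by nlinarith [sq_nonneg c]
      obtain ⟨J, hJu, hJl, hJh⟩ := exists_subset_sum Finset.univ (fun i => (t i)^2)
        (c^2/2) (by positivity) (fun i _ => sq_nonneg _)
        (fun i _ => (hcase i).le) htot2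
      have hJl' : c^2/2 ≤ ∑ j ∈ J, (t j)^2 := by simpa using hJl
      have hJh' : ∑ j ∈ J, (t j)^2 ≤ 2*(c^2/2) := by simpa using hJh
      clear hJl hJh
      have hprodJ : (∏ i, fejerKappa f (t i)) ≤ ∏ i ∈ J, fejerKappa f (t i) := by
        rw [← Finset.prod_sdiff hJu]
        apply mul_le_of_le_one_left (Finset.prod_nonneg (fun j _ => kappa_nonneg f (t j)))
        apply Finset.prod_le_one (fun j _ => kappa_nonneg f (t j))
          (fun j _ => kappa_le_one hfeven (t j))
      have hJsmall : ∀ j ∈ J, |t j| ≤ 1/(8*Real.sqrt (fejerC f)) := by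
        intro j _
        have h10 : (t j)^2 < c^2/2 := hcase j
        have h11 : (t j)^2 ≤ (1/(8*Real.sqrt (fejerC f)))^2 := by
          have : (1/(8*Real.sqrt (fejerC f)))^2 = 1/(64*fejerC f) := by
            rw [div_pow, mul_pow, hssq]; norm_num
          rw [this]
          have h12 : (1:ℝ)/(128*fejerC f) ≤ 1/(64*fejerC f) := by
            apply div_le_div_of_nonneg_left (by norm_num) (by positivity) (by nlinarith)
          nlinarith [hc2]
        calc |t j| = Real.sqrt ((t j)^2) := (Real.sqrt_sq_eq_abs _).symm
          _ ≤ Real.sqrt ((1/(8*Real.sqrt (fejerC f)))^2) := Real.sqrt_le_sqrt h11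
          _ = 1/(8*Real.sqrt (fejerC f)) := Real.sqrt_sq (by positivity)
      have hkapJ : ∀ j ∈ J, fejerKappa f (t j) ≤ 1 - fejerC f/3*(t j)^2 :=
        fun j hj => kappa_K1 hfeven hf (t j) (hJsmall j hj)
      have hcJ0 : ∀ j ∈ J, 0 ≤ fejerC f/3*(t j)^2 := fun j _ => by positivity
      have hcJ1 : ∀ j ∈ J, fejerC f/3*(t j)^2 ≤ 1 := by
        intro j _
        have h10 : (t j)^2 ≤ 1/(128*fejerC f) := by nlinarith [hcase j, hc2]
        have h6 : fejerC f/3*(t j)^2 ≤ fejerC f/3*(1/(128*fejerC f)) :=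
          mul_le_mul_of_nonneg_left h10 (by positivity)
        have h7 : fejerC f/3*(1/(128*fejerC f)) = 1/384 := by field_simp; ring
        linarith
      have hprod2 : (∏ j ∈ J, fejerKappa f (t j)) ≤ ∏ j ∈ J, (1 - fejerC f/3*(t j)^2) :=
        Finset.prod_le_prod (fun j _ => kappa_nonneg f (t j)) hkapJ
      have happ := prod_one_sub_le J (fun j => fejerC f/3*(t j)^2) hcJ0 hcJ1
      set S := ∑ j ∈ J, fejerC f/3*(t j)^2 with hSdef
      have hSsum : S = fejerC f/3*(∑ j ∈ J, (t j)^2) := by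
        rw [hSdef, ← Finset.mul_sum]
      have hS0 : 0 ≤ S := Finset.sum_nonneg hcJ0
      have hS1 : fejerC f/6*c^2 ≤ S := by
        rw [hSsum]
        have := mul_le_mul_of_nonneg_left hJl' (show (0:ℝ) ≤ fejerC f/3 by positivity)
        calc fejerC f/6*c^2 = fejerC f/3*(c^2/2) := by ring
          _ ≤ fejerC f/3*(∑ j ∈ J, (t j)^2) := this
      have hS2 : S ≤ 1/384 := by
        rw [hSsum]
        have h13 : (∑ j ∈ J, (t j)^2) ≤ c^2 := by linarith [hJh']
        have h14 : fejerC f/3*(∑ j ∈ J, (t j)^2) ≤ fejerC f/3*(1/(128*fejerC f)) := by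
          apply mul_le_mul_of_nonneg_left _ (by positivity)
          linarith [hc2]
        have h7 : fejerC f/3*(1/(128*fejerC f)) = 1/384 := by field_simp; ring
        linarith
      have hsq : S^2/2 ≤ S/768 := by nlinarith [mul_le_mul_of_nonneg_left hS2 hS0]
      have hfinal : 1 - S + S^2/2 ≤ 1 - fejerC f/8*c^2 := by
        have h15 : fejerC f/8*c^2 ≤ 3/4*S := by linarith [hS1]
        linarith
      calc (∏ i, fejerKappa f (t i)) ≤ ∏ j ∈ J, fejerKappa f (t j) := hprodJ
        _ ≤ ∏ j ∈ J, (1 - fejerC f/3*(t j)^2) := hprod2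
        _ ≤ 1 - S + S^2/2 := happ
        _ ≤ 1 - fejerC f/8*c^2 := hfinal
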